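/- If a bipartite state ρ_AB on ℂ^d ⊗ ℂ^d is k-extendible on B (i.e., there exists a state σ on A⊗B^{⊗k} invariant under permutations of the k copies of B with each single-copy marginal equal to ρ_AB), then its fidelity with the maximally entangled state satisfies ⟨Φ|ρ_AB|Φ⟩ ≤ (k + d − 1)/(dk). -/

import Mathlib

open Matrix BigOperators
open scoped ComplexOrder

/-- The maximally entangled unit vector `|Φ⟩ = (1/√d) Σ_i |ii⟩`. -/
noncomputable def mesVec (d : ℕ) : Fin d × Fin d → ℂ :=
  fun p => if p.1 = p.2 then (1 / (Real.sqrt d : ℂ)) else 0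

/-- Action of a permutation `π` of the `k` copies of `B ≅ ℂ^d` on an operator
on `A ⊗ B^{⊗k}`, where `B^{⊗k}` is indexed by functions `Fin k → Fin d`. -/
def permB {d k : ℕ} (π : Equiv.Perm (Fin k))
    (σ : Matrix (Fin d × (Fin k → Fin d)) (Fin d × (Fin k → Fin d)) ℂ) :
    Matrix (Fin d × (Fin k → Fin d)) (Fin d × (Fin k → Fin d)) ℂ :=
  Matrix.reindex
    ((Equiv.refl (Fin d)).prodCongr (π.arrowCongr (Equiv.refl (Fin d))))
    ((Equiv.refl (Fin d)).prodCongr (π.arrowCongr (Equiv.refl (Fin d)))) σ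

/-- Partial trace over all `B`-factors except the `j`-th one. -/
noncomputable def margB {d k : ℕ} (j : Fin k)
    (σ : Matrix (Fin d × (Fin k → Fin d)) (Fin d × (Fin k → Fin d)) ℂ) :
    Matrix (Fin d × Fin d) (Fin d × Fin d) ℂ :=
  Matrix.of fun p q =>
    ∑ g : Fin k → Fin d,
      if g j = p.2 then σ (p.1, g) (q.1, Function.update g j q.2) else 0

/-- A state `ρ_AB` is `k`-extendible on `B` if it has a permutation-invariant
extension to `A ⊗ B^{⊗k}` whose single-copy marginals all equal `ρ_AB`. -/
def KExtendible (d k : ℕ)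
    (ρ : Matrix (Fin d × Fin d) (Fin d × Fin d) ℂ) : Prop :=
  ∃ σ : Matrix (Fin d × (Fin k → Fin d)) (Fin d × (Fin k → Fin d)) ℂ,
    σ.PosSemidef ∧ σ.trace = 1 ∧
      (∀ π : Equiv.Perm (Fin k), permB π σ = σ) ∧
      (∀ j : Fin k, margB j σ = ρ)

variable {d k : ℕ}

lemma update_eq_update_iff (j : Fin k) (f g : Fin k → Fin d) :
    Function.update f j (g j) = g ↔ ∀ l, l ≠ j → f l = g l := by
  rw [Function.update_eq_iff]
  simp

lemma update_comm_eq (j : Fin k) (f g : Fin k → Fin d) :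
    Function.update f j (g j) = g ↔ Function.update g j (f j) = f := by
  rw [update_eq_update_iff, update_eq_update_iff]
  exact ⟨fun h l hl => (h l hl).symm, fun h l hl => (h l hl).symm⟩

noncomputable def Pmat (d k : ℕ) (j : Fin k) :
    Matrix (Fin d × (Fin k → Fin d)) (Fin d × (Fin k → Fin d)) ℂ :=
  Matrix.of fun p q =>
    if p.1 = p.2 j ∧ q.1 = q.2 j ∧ Function.update p.2 j (q.2 j) = q.2
    then (d : ℂ)⁻¹ else 0

lemma Pmat_herm (j : Fin k) : (Pmat d k j).IsHermitian := by
  ext ⟨a, f⟩ ⟨b, g⟩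
  simp only [Pmat, conjTranspose_apply, Matrix.of_apply]
  by_cases h : a = f j ∧ b = g j ∧ Function.update f j (g j) = g
  · rw [if_pos ⟨h.2.1, h.1, (update_comm_eq j f g).mp h.2.2⟩, if_pos h]
    simp
  · rw [if_neg (fun hc => h ⟨hc.2.1, hc.1, (update_comm_eq j g f).mp hc.2.2⟩), if_neg h]
    simp

lemma Pmat_mul_apply (i : Fin k) (M : Matrix (Fin d × (Fin k → Fin d)) (Fin d × (Fin k → Fin d)) ℂ)
    (a : Fin d) (f : Fin k → Fin d) (q : Fin d × (Fin k → Fin d)) :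
    (Pmat d k i * M) (a, f) q
      = if a = f i then (d : ℂ)⁻¹ * ∑ c, M (c, Function.update f i c) q else 0 := by
  rw [Matrix.mul_apply]
  rw [Fintype.sum_prod_type]
  have h1 : ∀ (c : Fin d) (h : Fin k → Fin d),
      Pmat d k i (a, f) (c, h) = if a = f i ∧ h = Function.update f i c then (d : ℂ)⁻¹ else 0 := by
    intro c h
    simp only [Pmat, Matrix.of_apply]
    refine if_congr (Iff.intro ?_ ?_) rfl rfl
    · rintro ⟨h1, h2, h3⟩
      exact ⟨h1, by rw [← h3, ← h2]⟩
    · rintro ⟨h1, h2⟩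
      subst h2
      simp [h1]
  simp only [h1, ite_and, ite_mul, zero_mul]
  by_cases ha : a = f i
  · simp only [if_pos ha, Finset.mul_sum]
    congr 1; funext c
    rw [Finset.sum_ite_eq' Finset.univ (Function.update f i c)
      (fun h => (d:ℂ)⁻¹ * M (c, h) q)]
    simp
  · simp [if_neg ha]

lemma mul_Pmat_apply (i : Fin k) (M : Matrix (Fin d × (Fin k → Fin d)) (Fin d × (Fin k → Fin d)) ℂ)
    (p : Fin d × (Fin k → Fin d)) (b : Fin d) (g : Fin k → Fin d) :
    (M * Pmat d k i) p (b, g)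
      = if b = g i then (d : ℂ)⁻¹ * ∑ c, M p (c, Function.update g i c) else 0 := by
  rw [Matrix.mul_apply]
  rw [Fintype.sum_prod_type]
  have h1 : ∀ (c : Fin d) (h : Fin k → Fin d),
      Pmat d k i (c, h) (b, g) = if b = g i ∧ h = Function.update g i c then (d : ℂ)⁻¹ else 0 := by
    intro c h
    simp only [Pmat, Matrix.of_apply]
    refine if_congr (Iff.intro ?_ ?_) rfl rfl
    · rintro ⟨h1, h2, h3⟩
      rw [update_comm_eq] at h3
      exact ⟨h2, by rw [← h3, ← h1]⟩
    · rintro ⟨h1, h2⟩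
      subst h2
      refine ⟨by simp, h1, ?_⟩
      rw [update_comm_eq]
      simp
  simp only [h1, ite_and, mul_ite, mul_zero]
  by_cases hb : b = g i
  · simp only [if_pos hb, Finset.mul_sum]
    congr 1; funext c
    rw [Finset.sum_ite_eq' Finset.univ (Function.update g i c)
      (fun h => M p (c, h) * (d:ℂ)⁻¹)]
    simp [mul_comm]
  · simp [if_neg hb]

lemma Pmat_idem (hd : 0 < d) (i : Fin k) : Pmat d k i * Pmat d k i = Pmat d k i := by
  ext ⟨a, f⟩ ⟨b, g⟩
  rw [Pmat_mul_apply]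
  have h1 : ∀ c : Fin d, Pmat d k i (c, Function.update f i c) (b, g)
      = if b = g i ∧ Function.update f i (g i) = g then (d : ℂ)⁻¹ else 0 := by
    intro c
    simp only [Pmat, Matrix.of_apply]
    refine if_congr (Iff.intro ?_ ?_) rfl rfl
    · rintro ⟨-, h2, h3⟩
      rw [Function.update_idem] at h3
      exact ⟨h2, h3⟩
    · rintro ⟨h2, h3⟩
      exact ⟨by simp, h2, by rwa [Function.update_idem]⟩
  simp only [h1]
  have hd' : (d : ℂ) ≠ 0 := Nat.cast_ne_zero.mpr hd.ne'
  simp only [Pmat, Matrix.of_apply]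
  by_cases ha : a = f i
  · simp only [if_pos ha, Finset.sum_const, Finset.card_univ, Fintype.card_fin, nsmul_eq_mul]
    by_cases hbg : b = g i ∧ Function.update f i (g i) = g
    · rw [if_pos hbg, if_pos ⟨ha, hbg.1, hbg.2⟩]
      field_simp
    · rw [if_neg hbg, if_neg (fun hc => hbg ⟨hc.2.1, hc.2.2⟩)]
      simp
  · rw [if_neg ha, if_neg (fun hc => ha hc.1)]

lemma key_iff {i j : Fin k} (hij : i ≠ j) (f g : Fin k → Fin d) :
    Function.update (Function.update f i (f j)) j (g j) = Function.update g i (g j)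
      ↔ Function.update f i (g i) = g := by
  constructor
  · intro h
    funext l
    by_cases hl : l = i
    · subst hl; simp
    · rw [Function.update_of_ne hl]
      by_cases hlj : l = j
      · subst hlj
        have h2 := congrFun h i
        rw [Function.update_of_ne hij, Function.update_self, Function.update_self] at h2
        exact h2
      · have h2 := congrFun h l
        rw [Function.update_of_ne hlj, Function.update_of_ne hl,
          Function.update_of_ne hl] at h2
        exact h2
  · intro h
    have haux : ∀ l, l ≠ i → f l = g l := by
      intro l hl
      have := congrFun h l
      rwa [Function.update_of_ne hl] at this
    funext l
    by_cases hlj : l = j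
    · subst hlj
      rw [Function.update_self, Function.update_of_ne (Ne.symm hij)]
    · rw [Function.update_of_ne hlj]
      by_cases hl : l = i
      · subst hl
        rw [Function.update_self, Function.update_self]
        exact haux j (Ne.symm hij)
      · rw [Function.update_of_ne hl, Function.update_of_ne hl]
        exact haux l hl

lemma Pmat_mul_Pmat {i j : Fin k} (hij : i ≠ j) (a c : Fin d) (f h : Fin k → Fin d) :
    (Pmat d k i * Pmat d k j) (a, f) (c, h)
      = if a = f i ∧ c = h j ∧
          Function.update (Function.update f i (f j)) j (h j) = h
        then (d : ℂ)⁻¹ * (d : ℂ)⁻¹ else 0 := by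
  rw [Pmat_mul_apply]
  have h1 : ∀ e : Fin d, Pmat d k j (e, Function.update f i e) (c, h)
      = if e = f j then
          (if c = h j ∧ Function.update (Function.update f i (f j)) j (h j) = h
            then (d : ℂ)⁻¹ else 0) else 0 := by
    intro e
    simp only [Pmat, Matrix.of_apply]
    rw [← ite_and]
    refine if_congr (Iff.intro ?_ ?_) rfl rfl
    · rintro ⟨h1, h2, h3⟩
      rw [Function.update_of_ne (Ne.symm hij)] at h1
      subst h1
      exact ⟨rfl, h2, h3⟩
    · rintro ⟨h1, h2, h3⟩
      subst h1
      exact ⟨(Function.update_of_ne (Ne.symm hij) _ _).symm, h2, h3⟩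
  simp only [h1, Finset.sum_ite_eq' Finset.univ, Finset.mem_univ, if_true]
  by_cases ha : a = f i
  · simp [ha, ite_and, mul_ite]
  · simp [ha]

lemma Pmat_triple (hd : 0 < d) {i j : Fin k} (hij : i ≠ j) :
    Pmat d k i * Pmat d k j * Pmat d k i = ((d : ℂ) ^ 2)⁻¹ • Pmat d k i := by
  ext ⟨a, f⟩ ⟨b, g⟩
  rw [mul_Pmat_apply]
  have h1 : ∀ c : Fin d, (Pmat d k i * Pmat d k j) (a, f) (c, Function.update g i c)
      = if c = g j then
          (if a = f i ∧ Function.update (Function.update f i (f j)) j (g j)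
              = Function.update g i (g j)
            then (d : ℂ)⁻¹ * (d : ℂ)⁻¹ else 0) else 0 := by
    intro c
    rw [Pmat_mul_Pmat hij]
    rw [← ite_and]
    refine if_congr (Iff.intro ?_ ?_) rfl rfl
    · rintro ⟨h1, h2, h3⟩
      rw [Function.update_of_ne (Ne.symm hij)] at h2 h3
      subst h2
      exact ⟨rfl, h1, h3⟩
    · rintro ⟨h1, h2, h3⟩
      subst h1
      rw [Function.update_of_ne (Ne.symm hij)]
      exact ⟨h2, rfl, h3⟩
  simp only [h1, Finset.sum_ite_eq' Finset.univ, Finset.mem_univ, if_true]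
  simp only [Pmat, Matrix.smul_apply, Matrix.of_apply, smul_ite, smul_zero, smul_eq_mul]
  have hd' : (d : ℂ) ≠ 0 := Nat.cast_ne_zero.mpr hd.ne'
  by_cases hb : b = g i
  · simp only [if_pos hb]
    by_cases hcond : a = f i ∧ Function.update f i (g i) = g
    · rw [if_pos ⟨hcond.1, (key_iff hij f g).mpr hcond.2⟩, if_pos ⟨hcond.1, hb, hcond.2⟩]
      field_simp
    · rw [if_neg (fun hc => hcond ⟨hc.1, (key_iff hij f g).mp hc.2⟩),
        if_neg (fun hc => hcond ⟨hc.1, hc.2.2⟩)]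
      simp
  · rw [if_neg hb, if_neg (fun hc => hb hc.2.1)]
    simp

lemma mes_quadform {d : ℕ} (M : Matrix (Fin d × Fin d) (Fin d × Fin d) ℂ) :
    star (mesVec d) ⬝ᵥ M.mulVec (mesVec d)
      = (d : ℂ)⁻¹ * ∑ a : Fin d, ∑ b : Fin d, M (a, a) (b, b) := by
  have hs : star (1 / (Real.sqrt d : ℂ)) = 1 / (Real.sqrt d : ℂ) := by
    rw [star_div₀, star_one, Complex.star_def, Complex.conj_ofReal]
  have hss : (1 / (Real.sqrt d : ℂ)) * (1 / (Real.sqrt d : ℂ)) = (d : ℂ)⁻¹ := by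
    rw [div_mul_div_comm, one_mul, ← Complex.ofReal_mul,
      Real.mul_self_sqrt (Nat.cast_nonneg d)]
    simp
  simp only [dotProduct, Matrix.mulVec, Pi.star_apply, mesVec, Fintype.sum_prod_type]
  simp only [apply_ite, hs, star_zero, ite_mul, mul_ite, zero_mul, mul_zero,
    Finset.sum_ite_eq, Finset.mem_univ, if_true]
  rw [Finset.mul_sum]
  congr 1; funext a
  rw [Finset.mul_sum]
  have : ∀ b : Fin d, 1 / (Real.sqrt d : ℂ) * (M (a, a) (b, b) * (1 / (Real.sqrt d : ℂ)))
      = (d : ℂ)⁻¹ * M (a, a) (b, b) := by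
    intro b
    rw [← hss]; ring
  simp only [this]
  rw [Finset.mul_sum]

lemma trace_mul_Pmat (j : Fin k)
    (σ : Matrix (Fin d × (Fin k → Fin d)) (Fin d × (Fin k → Fin d)) ℂ) :
    (σ * Pmat d k j).trace
      = star (mesVec d) ⬝ᵥ (margB j σ).mulVec (mesVec d) := by
  rw [mes_quadform]
  simp only [Matrix.trace, Matrix.diag_apply]
  have h1 : ∀ (a : Fin d) (f : Fin k → Fin d),
      (σ * Pmat d k j) (a, f) (a, f)
        = if a = f j then (d : ℂ)⁻¹ * ∑ c, σ (a, f) (c, Function.update f j c) else 0 :=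
    fun a f => mul_Pmat_apply j σ (a, f) a f
  have h2 : ∀ a : Fin d, ∀ b : Fin d, margB j σ (a, a) (b, b)
      = ∑ g : Fin k → Fin d, if g j = a then σ (a, g) (b, Function.update g j b) else 0 :=
    fun a b => rfl
  simp only [Fintype.sum_prod_type, h1, h2]
  have hL : ∑ a : Fin d, ∑ f : Fin k → Fin d,
      (if a = f j then (d : ℂ)⁻¹ * ∑ c, σ (a, f) (c, Function.update f j c) else 0)
      = (d : ℂ)⁻¹ * ∑ f : Fin k → Fin d, ∑ c, σ (f j, f) (c, Function.update f j c) := by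
    rw [Finset.sum_comm, Finset.mul_sum]
    congr 1; funext f
    rw [Finset.sum_ite_eq' Finset.univ (f j)
      (fun a => (d : ℂ)⁻¹ * ∑ c, σ (a, f) (c, Function.update f j c))]
    simp
  have hR : ∑ a : Fin d, ∑ b : Fin d, ∑ g : Fin k → Fin d,
      (if g j = a then σ (a, g) (b, Function.update g j b) else 0)
      = ∑ f : Fin k → Fin d, ∑ c, σ (f j, f) (c, Function.update f j c) := by
    rw [Finset.sum_comm]
    have : ∀ b : Fin d, ∑ a : Fin d, ∑ g : Fin k → Fin d,
        (if g j = a then σ (a, g) (b, Function.update g j b) else 0)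
        = ∑ g : Fin k → Fin d, σ (g j, g) (b, Function.update g j b) := by
      intro b
      rw [Finset.sum_comm]
      congr 1; funext g
      rw [Finset.sum_ite_eq Finset.univ (g j)
        (fun a => σ (a, g) (b, Function.update g j b))]
      simp
    simp only [this]
    rw [Finset.sum_comm]
  rw [hL, hR]

noncomputable def toE {n : Type*} [Fintype n] (v : n → ℂ) : EuclideanSpace ℂ n :=
  (WithLp.equiv 2 (n → ℂ)).symm v

lemma inner_toE {n : Type*} [Fintype n] (x y : n → ℂ) :
    (inner ℂ (toE x) (toE y) : ℂ) = star x ⬝ᵥ y := by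
  simp [toE, PiLp.inner_apply, dotProduct, RCLike.inner_apply, mul_comm]

lemma inner_toE_mulVec {n : Type*} [Fintype n] [DecidableEq n]
    (M : Matrix n n ℂ) (hM : Mᴴ = M) (x y : n → ℂ) :
    (inner ℂ (toE (M.mulVec x)) (toE y) : ℂ) = inner ℂ (toE x) (toE (M.mulVec y)) := by
  rw [inner_toE, inner_toE, Matrix.star_mulVec, hM, Matrix.dotProduct_mulVec]

lemma cre_norm {n : Type*} [Fintype n] (x : EuclideanSpace ℂ n) :
    (inner ℂ x x : ℂ).re = ‖x‖ ^ 2 := by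
  have := inner_self_eq_norm_sq (𝕜 := ℂ) x
  simpa using this

lemma quadform (hd : 0 < d) (hk : 0 < k) (ψ : Fin d × (Fin k → Fin d) → ℂ) :
    ∑ j : Fin k, (star ψ ⬝ᵥ (Pmat d k j).mulVec ψ).re
      ≤ ((k + d - 1) / d : ℝ) * (star ψ ⬝ᵥ ψ).re := by
  have hdR : (0 : ℝ) < d := by exact_mod_cast hd
  have hkR : (1 : ℝ) ≤ k := by exact_mod_cast hk
  set c : ℝ := ((k + d - 1) / d : ℝ) with hc
  have hc0 : 0 ≤ c := by
    apply div_nonneg _ hdR.le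
    linarith
  have hherm : ∀ j : Fin k, (Pmat d k j)ᴴ = Pmat d k j := fun j => Pmat_herm j
  set A : Fin k → EuclideanSpace ℂ (Fin d × (Fin k → Fin d)) :=
    fun j => toE ((Pmat d k j).mulVec ψ) with hA
  set Ψ : EuclideanSpace ℂ (Fin d × (Fin k → Fin d)) := toE ψ with hΨ
  have key1 : ∀ j, (inner ℂ Ψ (A j) : ℂ) = inner ℂ (A j) (A j) := by
    intro j
    calc (inner ℂ Ψ (A j) : ℂ)
        = inner ℂ (toE ψ) (toE (((Pmat d k j) * (Pmat d k j)).mulVec ψ)) := by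
          rw [Pmat_idem hd j]
      _ = inner ℂ (toE ψ) (toE ((Pmat d k j).mulVec ((Pmat d k j).mulVec ψ))) := by
          rw [← Matrix.mulVec_mulVec]
      _ = inner ℂ (A j) (A j) := (inner_toE_mulVec _ (hherm j) _ _).symm
  have key1' : ∀ j, (inner ℂ Ψ (A j) : ℂ).re = ‖A j‖ ^ 2 := by
    intro j; rw [key1]; exact cre_norm _
  -- cross terms
  have key2 : ∀ i j : Fin k, i ≠ j →
      ‖(inner ℂ (A i) (A j) : ℂ)‖ ≤ (d : ℝ)⁻¹ * ‖A i‖ * ‖A j‖ := by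
    intro i j hij
    set B : EuclideanSpace ℂ (Fin d × (Fin k → Fin d)) :=
      toE ((Pmat d k j).mulVec ((Pmat d k i).mulVec ψ)) with hB
    have hBB : (inner ℂ B B : ℂ) = (((d : ℂ) ^ 2)⁻¹) * inner ℂ Ψ (A i) := by
      calc (inner ℂ B B : ℂ)
          = inner ℂ (toE ((Pmat d k i).mulVec ψ))
              (toE ((Pmat d k j).mulVec ((Pmat d k j).mulVec ((Pmat d k i).mulVec ψ)))) :=
            inner_toE_mulVec _ (hherm j) _ _
        _ = inner ℂ (toE ((Pmat d k i).mulVec ψ))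
              (toE ((Pmat d k j).mulVec ((Pmat d k i).mulVec ψ))) := by
            rw [Matrix.mulVec_mulVec, Pmat_idem hd j]
        _ = inner ℂ (toE ψ)
              (toE ((Pmat d k i).mulVec ((Pmat d k j).mulVec ((Pmat d k i).mulVec ψ)))) := by
            rw [inner_toE_mulVec _ (hherm i)]
        _ = inner ℂ (toE ψ) (toE (((Pmat d k i * Pmat d k j * Pmat d k i)).mulVec ψ)) := by
            rw [Matrix.mulVec_mulVec, Matrix.mulVec_mulVec]
        _ = inner ℂ (toE ψ) (toE (((((d : ℂ) ^ 2)⁻¹ • Pmat d k i)).mulVec ψ)) := by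
            rw [Pmat_triple hd hij]
        _ = (((d : ℂ) ^ 2)⁻¹) * inner ℂ Ψ (A i) := by
            rw [Matrix.smul_mulVec]
            rw [inner_toE, inner_toE]
            rw [dotProduct_smul]
            simp [smul_eq_mul]
    have hBre : ‖B‖ ^ 2 = ((d : ℝ) ⁻¹ * ‖A i‖) ^ 2 := by
      have h1 : (inner ℂ B B : ℂ).re = (((d:ℝ) ^ 2)⁻¹) * (inner ℂ Ψ (A i) : ℂ).re := by
        rw [hBB]
        have : ((d : ℂ) ^ 2)⁻¹ = (((((d:ℝ)) ^ 2)⁻¹ : ℝ) : ℂ) := by push_cast; ring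
        rw [this, Complex.re_ofReal_mul]
      rw [← cre_norm B, h1, key1' i]
      rw [mul_pow]
      congr 1
      rw [inv_pow]
    have hBn : ‖B‖ = (d : ℝ)⁻¹ * ‖A i‖ := by
      have h2 : 0 ≤ (d : ℝ)⁻¹ * ‖A i‖ := by positivity
      calc ‖B‖ = Real.sqrt (‖B‖ ^ 2) := (Real.sqrt_sq (norm_nonneg B)).symm
        _ = Real.sqrt (((d : ℝ)⁻¹ * ‖A i‖) ^ 2) := by rw [hBre]
        _ = (d : ℝ)⁻¹ * ‖A i‖ := Real.sqrt_sq h2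
    have hcross : (inner ℂ (A i) (A j) : ℂ) = inner ℂ B (A j) := by
      calc (inner ℂ (A i) (A j) : ℂ)
          = inner ℂ (toE ((Pmat d k i).mulVec ψ))
              (toE ((Pmat d k j).mulVec ((Pmat d k j).mulVec ψ))) := by
            rw [Matrix.mulVec_mulVec, Pmat_idem hd j]
        _ = inner ℂ B (A j) := (inner_toE_mulVec _ (hherm j) _ _).symm
    rw [hcross]
    calc ‖(inner ℂ B (A j) : ℂ)‖ ≤ ‖B‖ * ‖A j‖ := norm_inner_le_norm _ _
      _ = (d : ℝ)⁻¹ * ‖A i‖ * ‖A j‖ := by rw [hBn]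
  -- assembly
  set S : EuclideanSpace ℂ (Fin d × (Fin k → Fin d)) := ∑ j, A j with hS
  set N : Fin k → ℝ := fun j => ‖A j‖ with hN
  set T : ℝ := ∑ j, N j ^ 2 with hT
  have hT0 : 0 ≤ T := Finset.sum_nonneg fun j _ => sq_nonneg _
  have hLHS : ∑ j : Fin k, (star ψ ⬝ᵥ (Pmat d k j).mulVec ψ).re = T := by
    refine Finset.sum_congr rfl fun j _ => ?_
    rw [← inner_toE]
    exact key1' j
  have hTinner : T = (inner ℂ Ψ S : ℂ).re := by
    rw [hS, inner_sum, Complex.re_sum]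
    exact (Finset.sum_congr rfl fun j _ => (key1' j).symm)
  have hΨnorm : (star ψ ⬝ᵥ ψ).re = ‖Ψ‖ ^ 2 := by
    rw [← inner_toE]; exact cre_norm Ψ
  have hsum_sq : (∑ j, N j) ^ 2 ≤ (k : ℝ) * T := by
    have h := sq_sum_le_card_mul_sum_sq (s := (Finset.univ : Finset (Fin k))) (f := N)
    simpa [hT] using h
  have hSnorm : ‖S‖ ^ 2 ≤ c * T := by
    have hSS : ‖S‖ ^ 2 = ∑ i, ∑ j, (inner ℂ (A i) (A j) : ℂ).re := by
      rw [← cre_norm S]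
      nth_rewrite 1 [hS]
      rw [sum_inner, Complex.re_sum]
      refine Finset.sum_congr rfl fun i _ => ?_
      rw [hS, inner_sum, Complex.re_sum]
    rw [hSS]
    have hg : ∀ i j : Fin k, (inner ℂ (A i) (A j) : ℂ).re
        ≤ (d : ℝ)⁻¹ * (N i * N j)
          + (if i = j then N i ^ 2 - (d : ℝ)⁻¹ * (N i * N i) else 0) := by
      intro i j
      by_cases hij : i = j
      · subst hij
        rw [if_pos rfl, cre_norm]
        have h0 : (N i : ℝ) ^ 2 = ‖A i‖ ^ 2 := rfl
        rw [← h0]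
        linarith
      · rw [if_neg hij]
        have h1 : (inner ℂ (A i) (A j) : ℂ).re ≤ ‖(inner ℂ (A i) (A j) : ℂ)‖ := by
          exact Complex.re_le_norm _
        have h2 := key2 i j hij
        simp only [add_zero]
        calc (inner ℂ (A i) (A j) : ℂ).re ≤ ‖(inner ℂ (A i) (A j) : ℂ)‖ := h1
          _ ≤ (d : ℝ)⁻¹ * ‖A i‖ * ‖A j‖ := h2
          _ = (d : ℝ)⁻¹ * (N i * N j) := by rw [hN]; ring
    calc ∑ i, ∑ j, (inner ℂ (A i) (A j) : ℂ).re
        ≤ ∑ i, ∑ j, ((d : ℝ)⁻¹ * (N i * N j)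
          + (if i = j then N i ^ 2 - (d : ℝ)⁻¹ * (N i * N i) else 0)) := by
          refine Finset.sum_le_sum fun i _ => Finset.sum_le_sum fun j _ => hg i j
      _ = (d : ℝ)⁻¹ * (∑ j, N j) ^ 2 + (T - (d : ℝ)⁻¹ * T) := by
          simp only [Finset.sum_add_distrib, Finset.sum_ite_eq, Finset.mem_univ, if_true]
          have e1 : ∑ i : Fin k, ∑ j : Fin k, (d : ℝ)⁻¹ * (N i * N j)
              = (d : ℝ)⁻¹ * (∑ j, N j) ^ 2 := by
            simp only [← Finset.mul_sum]
            rw [← Finset.sum_mul, ← sq]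
          have e2 : ∑ i : Fin k, (N i ^ 2 - (d : ℝ)⁻¹ * (N i * N i)) = T - (d : ℝ)⁻¹ * T := by
            rw [Finset.sum_sub_distrib, ← Finset.mul_sum]
            have e3 : ∑ i : Fin k, N i * N i = T := by
              rw [hT]; congr 1; funext i; rw [sq]
            rw [e3, ← hT]
          rw [e1, e2]
      _ ≤ (d : ℝ)⁻¹ * ((k : ℝ) * T) + (T - (d : ℝ)⁻¹ * T) := by
          have := mul_le_mul_of_nonneg_left hsum_sq (inv_nonneg.mpr hdR.le)
          linarith
      _ = c * T := by
          rw [hc]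
          field_simp
          ring
  have hCS : T ≤ ‖Ψ‖ * ‖S‖ := by
    rw [hTinner]
    calc (inner ℂ Ψ S : ℂ).re ≤ ‖(inner ℂ Ψ S : ℂ)‖ := by
          exact Complex.re_le_norm _
      _ ≤ ‖Ψ‖ * ‖S‖ := norm_inner_le_norm _ _
  rw [hLHS, hΨnorm]
  rcases hT0.eq_or_lt with h0 | hTpos
  · rw [← h0]
    positivity
  · have hsq : T ^ 2 ≤ ‖Ψ‖ ^ 2 * ‖S‖ ^ 2 := by
      calc T ^ 2 = T * T := sq T
        _ ≤ (‖Ψ‖ * ‖S‖) * (‖Ψ‖ * ‖S‖) := mul_self_le_mul_self hT0 hCS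
        _ = ‖Ψ‖ ^ 2 * ‖S‖ ^ 2 := by ring
    have h3 : T ^ 2 ≤ ‖Ψ‖ ^ 2 * (c * T) :=
      hsq.trans (mul_le_mul_of_nonneg_left hSnorm (sq_nonneg _))
    nlinarith [h3, hTpos]

open scoped MatrixOrder in
lemma trace_bound (hd : 0 < d) (hk : 0 < k)
    (σ : Matrix (Fin d × (Fin k → Fin d)) (Fin d × (Fin k → Fin d)) ℂ)
    (hσ : σ.PosSemidef) :
    ∑ j : Fin k, ((σ * Pmat d k j).trace).re
      ≤ ((k + d - 1) / d : ℝ) * σ.trace.re := by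
  set R := CFC.sqrt σ with hRdef
  have hRH : Rᴴ = R := (Matrix.nonneg_iff_posSemidef.mp (CFC.sqrt_nonneg σ)).1
  have hRR : R * R = σ := CFC.sqrt_mul_sqrt_self σ (Matrix.nonneg_iff_posSemidef.mpr hσ)
  have hstar : ∀ p m, star (R p m) = R m p := by
    intro p m
    have := congrFun (congrFun hRH m) p
    rw [Matrix.conjTranspose_apply] at this
    exact this
  set v : (Fin d × (Fin k → Fin d)) → (Fin d × (Fin k → Fin d)) → ℂ :=
    fun m q => R q m with hv
  have hterm : ∀ (M : Matrix (Fin d × (Fin k → Fin d)) (Fin d × (Fin k → Fin d)) ℂ) m,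
      (star (v m) ⬝ᵥ M.mulVec (v m)) = (R * M * R) m m := by
    intro M m
    rw [Matrix.mul_apply]
    simp only [Matrix.mul_apply, dotProduct, Matrix.mulVec, Pi.star_apply, hv, hstar]
    simp only [Finset.mul_sum, Finset.sum_mul]
    rw [Finset.sum_comm]
    refine Finset.sum_congr rfl fun p _ => Finset.sum_congr rfl fun q _ => ?_
    ring
  have htr : ∀ j : Fin k, (σ * Pmat d k j).trace = ∑ m, star (v m) ⬝ᵥ (Pmat d k j).mulVec (v m) := by
    intro j
    rw [← hRR, Matrix.mul_assoc, Matrix.trace_mul_comm]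
    simp only [Matrix.trace, Matrix.diag_apply]
    refine Finset.sum_congr rfl fun m _ => ?_
    rw [hterm, Matrix.mul_assoc, ← Matrix.mul_assoc]
  have htrσ : ∑ m, (star (v m) ⬝ᵥ (v m)) = σ.trace := by
    rw [← hRR]
    simp only [Matrix.trace, Matrix.diag_apply, Matrix.mul_apply, dotProduct,
      Pi.star_apply, hv, hstar]
  calc ∑ j : Fin k, ((σ * Pmat d k j).trace).re
      = ∑ j : Fin k, ∑ m, (star (v m) ⬝ᵥ (Pmat d k j).mulVec (v m)).re := by
        refine Finset.sum_congr rfl fun j _ => ?_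
        rw [htr j, Complex.re_sum]
    _ = ∑ m, ∑ j : Fin k, (star (v m) ⬝ᵥ (Pmat d k j).mulVec (v m)).re := by
        rw [Finset.sum_comm]
    _ ≤ ∑ m, ((k + d - 1) / d : ℝ) * (star (v m) ⬝ᵥ (v m)).re := by
        refine Finset.sum_le_sum fun m _ => ?_
        exact quadform hd hk (v m)
    _ = ((k + d - 1) / d : ℝ) * σ.trace.re := by
        rw [← Finset.mul_sum, ← htrσ, Complex.re_sum]

/-- A `k`-extendible state has fidelity with the maximally entangled state at
most `(k + d − 1)/(dk)`. -/
theorem kExtendible_fidelity_le (d k : ℕ) (hd : 0 < d) (hk : 0 < k)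
    (ρ : Matrix (Fin d × Fin d) (Fin d × Fin d) ℂ)
    (hρ : ρ.PosSemidef) (hρtr : ρ.trace = 1)
    (hext : KExtendible d k ρ) :
    (star (mesVec d) ⬝ᵥ ρ.mulVec (mesVec d)).re ≤ (k + d - 1) / (d * k) := by
  obtain ⟨σ, hσpsd, hσtr, hperm, hmarg⟩ := hext
  have hF : ∀ j : Fin k, (σ * Pmat d k j).trace
      = star (mesVec d) ⬝ᵥ ρ.mulVec (mesVec d) := by
    intro j
    rw [trace_mul_Pmat j σ, hmarg j]
  have hsum : ∑ j : Fin k, ((σ * Pmat d k j).trace).re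
      = (k : ℝ) * (star (mesVec d) ⬝ᵥ ρ.mulVec (mesVec d)).re := by
    simp [hF]
  have hb := trace_bound hd hk σ hσpsd
  rw [hsum, hσtr] at hb
  have h1 : ((1 : ℂ)).re = 1 := rfl
  rw [h1, mul_one] at hb
  have hdR : (0 : ℝ) < d := by exact_mod_cast hd
  have hkR : (0 : ℝ) < k := by exact_mod_cast hk
  rw [le_div_iff₀ (by positivity)]
  have h2 : (k : ℝ) * (star (mesVec d) ⬝ᵥ ρ.mulVec (mesVec d)).re * d ≤ (k : ℝ) + d - 1 :=
    (le_div_iff₀ hdR).mp hb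
  have h3 : (star (mesVec d) ⬝ᵥ ρ.mulVec (mesVec d)).re * ((d : ℝ) * k)
      = (k : ℝ) * (star (mesVec d) ⬝ᵥ ρ.mulVec (mesVec d)).re * d := by ring
  linarith
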